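/- For all integers n ≥ 2 and β ≥ 2, with d = nβ − n + 1, one has C(n + ⌊d/2⌋ − 1, n) ≥ 27^{−n} · C(n + d − 1, n). That is, the number of monomials of degree at most ⌊d/2⌋ − 1 in n variables is at least 27^{−n} times the number of monomials of degree at most d − 1. -/

import Mathlib

lemma aux_choose (f : ℕ) : ∀ n : ℕ, (n + 2 * (f + 1)).choose n ≤ 3 ^ n * (n + f).choose n := by
  intro n
  induction n with
  | zero => simp
  | succ n ih =>
    have key : ((n + 1 + 2 * (f + 1)).choose (n + 1)) * (n + 1)
        ≤ (3 ^ (n + 1) * (n + 1 + f).choose (n + 1)) * (n + 1) := by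
      have h1 : (n + 1 + 2 * (f + 1)).choose (n + 1) * (n + 1)
          = (n + 1 + 2 * (f + 1)) * (n + 2 * (f + 1)).choose n := by
        have h := Nat.add_one_mul_choose_eq (n + 2 * (f + 1)) n
        rw [show n + 1 + 2 * (f + 1) = n + 2 * (f + 1) + 1 from by ring]
        omega
      have h2 : (n + 1 + f).choose (n + 1) * (n + 1)
          = (n + 1 + f) * (n + f).choose n := by
        have h := Nat.add_one_mul_choose_eq (n + f) n
        rw [show n + 1 + f = n + f + 1 from by ring]
        omega
      rw [h1]
      calc (n + 1 + 2 * (f + 1)) * (n + 2 * (f + 1)).choose n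
          ≤ (n + 1 + 2 * (f + 1)) * (3 ^ n * (n + f).choose n) :=
            Nat.mul_le_mul_left _ ih
        _ ≤ (3 * (n + 1 + f)) * (3 ^ n * (n + f).choose n) := by
            apply Nat.mul_le_mul_right
            omega
        _ = 3 ^ (n + 1) * ((n + 1 + f) * (n + f).choose n) := by ring
        _ = 3 ^ (n + 1) * ((n + 1 + f).choose (n + 1) * (n + 1)) := by rw [h2]
        _ = (3 ^ (n + 1) * (n + 1 + f).choose (n + 1)) * (n + 1) := by ring
    exact Nat.le_of_mul_le_mul_right key (Nat.succ_pos n)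

/-- For all `n ≥ 2` and `β ≥ 2`, with `d = nβ − n + 1` the Macaulay degree,
`C(n + ⌊d/2⌋ − 1, n) ≥ 27^{−n}·C(n + d − 1, n)`: the number of monomials of
degree at most `⌊d/2⌋ − 1` in `n` variables is at least `27^{−n}` times the
number of monomials of degree at most `d − 1`. -/
theorem stmt_13 (n β : ℕ) (hn : 2 ≤ n) (hβ : 2 ≤ β) :
    (((n + (n * β - n + 1) - 1).choose n : ℝ)) / (27 : ℝ) ^ n
      ≤ ((n + (n * β - n + 1) / 2 - 1).choose n : ℝ) := by
  set d := n * β - n + 1 with hd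
  have hnb : n ≤ n * β := Nat.le_mul_of_pos_right n (by omega)
  have hd3 : 3 ≤ d := by
    have : 2 * n ≤ n * β := by
      calc 2 * n = n * 2 := by ring
        _ ≤ n * β := Nat.mul_le_mul_left n hβ
    omega
  set e := d / 2 with he
  have he1 : 1 ≤ e := by omega
  obtain ⟨f, hf⟩ : ∃ f, e = f + 1 := ⟨e - 1, by omega⟩
  have hdle : d ≤ 2 * e + 1 := by omega
  have hnat : (n + d - 1).choose n ≤ 27 ^ n * (n + e - 1).choose n := by
    calc (n + d - 1).choose n ≤ (n + 2 * (f + 1)).choose n := by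
          apply Nat.choose_le_choose
          omega
      _ ≤ 3 ^ n * (n + f).choose n := aux_choose f n
      _ ≤ 27 ^ n * (n + e - 1).choose n := by
          have : n + f = n + e - 1 := by omega
          rw [this]
          exact Nat.mul_le_mul_right _ (Nat.pow_le_pow_left (by norm_num) n)
  rw [div_le_iff₀ (by positivity)]
  calc ((n + d - 1).choose n : ℝ) ≤ ((27 ^ n * (n + e - 1).choose n : ℕ) : ℝ) := by
        exact_mod_cast hnat
    _ = ((n + e - 1).choose n : ℝ) * 27 ^ n := by push_cast; ring
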